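/- For all integers n and m with n ≥ m ≥ 3, the strict inequality ξ*_{n,m} > ξ_{n,m} holds, where ξ*_{n,m} is the infimum of ρ_{n,L} over the injective length distributions L of length m with UD_n(L) nonempty. -/

import Mathlib

open Finset Filter Topology

/-- A code `(v 0, …, v (m-1))` is *uniquely decodable* if any two nonempty sequences of
indices whose corresponding concatenations of code words coincide are equal. -/
def IsUDCode {X : Type*} {m : ℕ} (v : Fin m → List X) : Prop :=
  ∀ s t : List (Fin m), s ≠ [] → t ≠ [] →
    (s.map v).flatten = (t.map v).flatten → s = t

/-- A *prefix code*: an injective sequence of nonempty words where no code word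
is a prefix of another. -/
def IsPrefixCode {X : Type*} {m : ℕ} (v : Fin m → List X) : Prop :=
  Function.Injective v ∧ (∀ i, v i ≠ []) ∧ ∀ i j, i ≠ j → ¬ v i <+: v j

/-- The set of uniquely decodable codes over an `n`-letter alphabet with
length distribution `L`. -/
def UD (n : ℕ) {m : ℕ} (L : Fin m → ℕ) : Set (Fin m → List (Fin n)) :=
  {v | (∀ i, (v i).length = L i) ∧ IsUDCode v}

/-- The set of prefix codes over an `n`-letter alphabet with length distribution `L`. -/
def PR (n : ℕ) {m : ℕ} (L : Fin m → ℕ) : Set (Fin m → List (Fin n)) :=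
  {v | (∀ i, (v i).length = L i) ∧ IsPrefixCode v}

/-- `ρ_{n,L} = |PR_n(L)| / |UD_n(L)|`. -/
noncomputable def rho (n : ℕ) {m : ℕ} (L : Fin m → ℕ) : ℝ :=
  ((PR n L).ncard : ℝ) / ((UD n L).ncard : ℝ)

/-- `ξ_{n,m} = inf_{L ∈ ℒ_{n,m}} ρ_{n,L}`. -/
noncomputable def xi (n m : ℕ) : ℝ :=
  sInf {r : ℝ | ∃ L : Fin m → ℕ, (∀ i, 1 ≤ L i) ∧ (UD n L).Nonempty ∧ r = rho n L}

/-- `ς_{n,m} = (n - (m mod (n-1))) / n^{⌊m/(n-1)⌋ + 1}`. -/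
noncomputable def varsigma (n m : ℕ) : ℝ :=
  ((n : ℝ) - (m % (n - 1) : ℕ)) / (n : ℝ) ^ (m / (n - 1) + 1)

/-- `q_{n,m}`: `1` if `n ≥ m`, and `(m-1)!/(m-1)^{m-1}` if `n < m`. -/
noncomputable def qnm (n m : ℕ) : ℝ :=
  if m ≤ n then 1 else (Nat.factorial (m - 1) : ℝ) / ((m - 1 : ℕ) : ℝ) ^ (m - 1)

/-- `ϖ_{n,m} = ∏_{i=1}^{m-1} (1 - (1 - n^{-i})/(n-1))`. -/
noncomputable def varpi (n m : ℕ) : ℝ :=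
  ∏ i ∈ Finset.Icc 1 (m - 1), (1 - (1 - 1 / (n : ℝ) ^ i) / ((n : ℝ) - 1))

/-- `η_{n,m} = 1 + Σ_{i=1}^{m-1} C(m-1,i)/(n^i - 1)`. -/
noncomputable def eta (n m : ℕ) : ℝ :=
  1 + ∑ i ∈ Finset.Icc 1 (m - 1), ((m - 1).choose i : ℝ) / ((n : ℝ) ^ i - 1)

/-- `ξ*_{n,m} = inf_{L ∈ ℒ*_{n,m}} ρ_{n,L}`, the infimum over injective length
distributions. -/
noncomputable def xiStar (n m : ℕ) : ℝ :=
  sInf {r : ℝ | ∃ L : Fin m → ℕ, (∀ i, 1 ≤ L i) ∧ Function.Injective L ∧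
    (UD n L).Nonempty ∧ r = rho n L}




section Proofs
/-- flatten of codes with nonempty words is nil iff nil -/
lemma flatten_nil {X : Type*} {m : ℕ} {v : Fin m → List X} (hv : ∀ i, v i ≠ [])
    {t : List (Fin m)} (h : (t.map v).flatten = []) : t = [] := by
  cases t with
  | nil => rfl
  | cons j t' =>
    simp only [List.map_cons, List.flatten_cons, List.append_eq_nil_iff] at h
    exact absurd h.1 (hv j)

lemma prefixCode_ud {X : Type*} {m : ℕ} {v : Fin m → List X}
    (hinj : Function.Injective v) (hne : ∀ i, v i ≠ [])
    (hpre : ∀ i j, i ≠ j → ¬ v i <+: v j) : IsUDCode v := by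
  have main : ∀ s t : List (Fin m), (s.map v).flatten = (t.map v).flatten → s = t := by
    intro s
    induction s with
    | nil => intro t h; exact (flatten_nil hne (Eq.symm h)).symm
    | cons i s' ih =>
      intro t h
      cases t with
      | nil => exact absurd (flatten_nil hne h) (by simp)
      | cons j t' =>
        simp only [List.map_cons, List.flatten_cons] at h
        have hij : i = j := by
          by_contra hne'
          have h1 : v i <+: (v j ++ (t'.map v).flatten) := ⟨(s'.map v).flatten, h⟩
          have h2 : v j <+: (v j ++ (t'.map v).flatten) := ⟨(t'.map v).flatten, rfl⟩
          rcases List.prefix_or_prefix_of_prefix h1 h2 with hp | hp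
          · exact hpre i j hne' hp
          · exact hpre j i (Ne.symm hne') hp
        subst hij
        have := List.append_cancel_left h
        rw [ih t' this]
  intro s t _ _ h; exact main s t h
/-- split a list at the first element satisfying P -/
lemma exists_split_first {γ : Type*} (P : γ → Prop) [DecidablePred P] :
    ∀ (t : List γ), (∃ i ∈ t, P i) →
      ∃ t₁ i t₂, t = t₁ ++ i :: t₂ ∧ P i ∧ ∀ i' ∈ t₁, ¬ P i' := by
  intro t
  induction t with
  | nil => rintro ⟨i, hi, -⟩; simp at hi
  | cons j t' ih =>
    intro h
    by_cases hj : P j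
    · exact ⟨[], j, t', by simp, hj, by simp⟩
    · have h' : ∃ i ∈ t', P i := by
        rcases h with ⟨i, hi, hPi⟩
        rcases List.mem_cons.1 hi with rfl | hi'
        · exact absurd hPi hj
        · exact ⟨i, hi', hPi⟩
      rcases ih h' with ⟨t₁, i, t₂, rfl, hPi, ht₁⟩
      exact ⟨j :: t₁, i, t₂, by simp, hPi, by
        intro i' hi'
        rcases List.mem_cons.1 hi' with rfl | hi''
        · exact hj
        · exact ht₁ i' hi''⟩


open Finset

section L2
variable {n : ℕ} {A : Finset (Fin n)} {w : List (Fin n)}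

lemma key_contra (hw : ∃ c ∈ w, c ∉ A) {y R₁ R₂ : List (Fin n)}
    (hyA : ∀ c ∈ y, c ∈ A) (hyne : y ≠ [])
    (heq : w ++ R₁ = y ++ (w ++ R₂)) : False := by
  classical
  have hdne : w.dropWhile (fun c => decide (c ∈ A)) ≠ [] := by
    intro hcon
    rcases hw with ⟨c, hc, hcA⟩
    have := List.dropWhile_eq_nil_iff.1 hcon c hc
    simp at this
    exact hcA this
  have hwd : w.takeWhile (fun c => decide (c ∈ A)) ++ w.dropWhile (fun c => decide (c ∈ A)) = w :=
    List.takeWhile_append_dropWhile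
  have hdpos : 0 < (w.dropWhile (fun c => decide (c ∈ A))).length := List.length_pos_iff.2 hdne
  have hplt : (w.takeWhile (fun c => decide (c ∈ A))).length < w.length := by
    conv_rhs => rw [← hwd]
    rw [List.length_append]; omega
  set p := (w.takeWhile (fun c => decide (c ∈ A))).length with hp
  have hxlen : p < (w ++ R₁).length := by rw [List.length_append]; omega
  -- the letter at position p of w is outside A
  have hwp : w[p]'hplt ∉ A := by
    have e1 : w[p]'hplt = (w.takeWhile (fun c => decide (c ∈ A)) ++
        w.dropWhile (fun c => decide (c ∈ A)))[p]'(by rw [hwd]; exact hplt) :=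
      List.getElem_of_eq hwd.symm _
    rw [e1, List.getElem_append_right (le_refl p)]
    have hnot := List.head_dropWhile_not (fun c => decide (c ∈ A)) (l := w) hdne
    simp only [decide_eq_false_iff_not] at hnot
    simpa [hp, List.getElem_zero] using hnot
  -- all letters of w before position p are in A
  have hwq : ∀ (q : ℕ) (hq : q < p), w[q]'(by omega) ∈ A := by
    intro q hq
    have e1 : w[q]'(by omega) = (w.takeWhile (fun c => decide (c ∈ A)) ++
        w.dropWhile (fun c => decide (c ∈ A)))[q]'(by rw [hwd]; omega) :=
      List.getElem_of_eq hwd.symm _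
    rw [e1, List.getElem_append_left hq]
    have := List.mem_takeWhile_imp (l := w) (p := fun c => decide (c ∈ A))
      (List.getElem_mem hq)
    simpa using this
  have hyl : 1 ≤ y.length := List.length_pos_iff.2 hyne
  have e2 : (w ++ R₁)[p]'hxlen = (y ++ (w ++ R₂))[p]'(by rw [← heq]; exact hxlen) :=
    List.getElem_of_eq heq _
  have e3 : (w ++ R₁)[p]'hxlen = w[p]'hplt := List.getElem_append_left hplt
  by_cases hpy : p < y.length
  · rw [List.getElem_append_left hpy] at e2
    exact hwp (by rw [← e3, e2]; exact hyA _ (List.getElem_mem hpy))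
  · push_neg at hpy
    rw [List.getElem_append_right hpy] at e2
    have h2 : p - y.length < w.length := by omega
    rw [List.getElem_append_left h2] at e2
    have h3 : p - y.length < p := by omega
    exact hwp (by rw [← e3, e2]; exact hwq _ h3)
end L2

open Finset

section Special
variable {n M : ℕ} (a : Fin M → Fin n) (w : List (Fin n))

noncomputable def scode : Fin (M + 1) → List (Fin n) :=
  Fin.snoc (fun i => [a i]) w

lemma scode_castSucc (i : Fin M) : scode a w i.castSucc = [a i] := by simp [scode]

lemma scode_last : scode a w (Fin.last M) = w := by simp [scode]

variable {a} {w}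

lemma scode_ne (hw : w ≠ []) : ∀ i, scode a w i ≠ [] := by
  intro i
  rcases Fin.eq_castSucc_or_eq_last i with ⟨j, rfl⟩ | rfl
  · rw [scode_castSucc]; simp
  · rw [scode_last]; exact hw

lemma letters_flatten {A : Finset (Fin n)} (hA : ∀ i, a i ∈ A) :
    ∀ (t : List (Fin (M + 1))), (∀ i ∈ t, i ≠ Fin.last M) →
      ((t.map (scode a w)).flatten).length = t.length ∧
        ∀ c ∈ (t.map (scode a w)).flatten, c ∈ A := by
  intro t
  induction t with
  | nil => simp
  | cons j t' ih =>
    intro h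
    have hj : j ≠ Fin.last M := h j List.mem_cons_self
    obtain ⟨j', rfl⟩ := Fin.exists_castSucc_eq.2 hj
    have ih' := ih (fun i hi => h i (List.mem_cons_of_mem _ hi))
    rw [List.map_cons, List.flatten_cons, scode_castSucc]
    refine ⟨by simp [ih'.1], ?_⟩
    intro c hc
    rcases List.mem_append.1 hc with hc | hc
    · rw [List.mem_singleton.1 hc]; exact hA j'
    · exact ih'.2 c hc

lemma mixed_contra {A : Finset (Fin n)} (hA : ∀ i, a i ∈ A) (hw : ∃ c ∈ w, c ∉ A)
    (s' t : List (Fin (M + 1)))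
    (h : w ++ ((s'.map (scode a w)).flatten) = (t.map (scode a w)).flatten)
    (ht : t ≠ []) (hthead : t.head ht ≠ Fin.last M) : False := by
  classical
  by_cases hlast : ∃ i ∈ t, i = Fin.last M
  · obtain ⟨t₁, i, t₂, rfl, rfl, ht₁⟩ := exists_split_first (fun i => i = Fin.last M) t hlast
    have ht₁ne : t₁ ≠ [] := by
      intro hcon
      subst hcon
      exact hthead rfl
    have hy := letters_flatten (w := w) hA t₁ ht₁
    have hyne : (t₁.map (scode a w)).flatten ≠ [] := by
      intro hcon
      rw [hcon] at hy
      exact ht₁ne (List.length_eq_zero_iff.1 hy.1.symm)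
    refine key_contra hw (R₁ := (s'.map (scode a w)).flatten) (R₂ := (t₂.map (scode a w)).flatten) hy.2 hyne ?_
    rw [h, List.map_append, List.flatten_append, List.map_cons, List.flatten_cons, scode_last]
  · push_neg at hlast
    have hall := letters_flatten (w := w) hA t hlast
    rcases hw with ⟨c, hc, hcA⟩
    have : c ∈ (t.map (scode a w)).flatten := by
      rw [← h]; exact List.mem_append.2 (Or.inl hc)
    exact hcA (hall.2 c this)

lemma special_ud (hinj : Function.Injective a) (hwne : w ≠ [])
    (hw : ∃ c ∈ w, c ∉ Finset.univ.image a) : IsUDCode (scode a w) := by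
  classical
  set A := Finset.univ.image a with hA
  have hAmem : ∀ i, a i ∈ A := fun i => Finset.mem_image.2 ⟨i, Finset.mem_univ _, rfl⟩
  have main : ∀ s t : List (Fin (M + 1)),
      (s.map (scode a w)).flatten = (t.map (scode a w)).flatten → s = t := by
    intro s
    induction s with
    | nil => intro t h; exact (flatten_nil (scode_ne hwne) h.symm).symm
    | cons i s' ih =>
      intro t h
      cases t with
      | nil => exact absurd (flatten_nil (scode_ne hwne) h) (by simp)
      | cons j t' =>
        have hij : i = j := by
          by_contra hne'
          rcases Fin.eq_castSucc_or_eq_last i with ⟨i', rfl⟩ | rfl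
          · rcases Fin.eq_castSucc_or_eq_last j with ⟨j', rfl⟩ | rfl
            · -- both letters: compare heads
              simp only [List.map_cons, List.flatten_cons, scode_castSucc] at h
              have : a i' = a j' := by
                have := congrArg (fun l => List.head? l) h
                simpa using this
              exact hne' (by rw [hinj this])
            · -- j = last, i letter: symmetric mixed
              simp only [List.map_cons, List.flatten_cons, scode_last] at h
              exact mixed_contra hAmem hw t' (i'.castSucc :: s') h.symm (by simp)
                (by simpa using (Fin.castSucc_lt_last i').ne)
          · -- i = last
            simp only [List.map_cons, List.flatten_cons, scode_last] at h
            refine mixed_contra hAmem hw s' (j :: t') h (by simp) ?_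
            simpa using fun hcon => hne' (by rw [hcon])
        subst hij
        simp only [List.map_cons, List.flatten_cons] at h
        rw [ih t' (List.append_cancel_left h)]
  intro s t _ _ h
  exact main s t h
end Special
section Counting
open scoped Classical

variable {n : ℕ}

def codeOf {m : ℕ} {b : Fin m → ℕ} (v : ∀ i, Fin (b i) → Fin n) : Fin m → List (Fin n) :=
  fun i => List.ofFn (v i)

lemma codeOf_length {m : ℕ} {b : Fin m → ℕ} (v : ∀ i, Fin (b i) → Fin n) (i : Fin m) :
    (codeOf v i).length = b i := by simp [codeOf]

lemma codeOf_injective {m : ℕ} {b : Fin m → ℕ} :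
    Function.Injective (codeOf (n := n) (b := b)) := by
  intro v v' h
  funext i t
  have := congrFun h i
  simp only [codeOf] at this
  exact congrFun (List.ofFn_injective this) t

lemma exists_codeOf {m : ℕ} {b : Fin m → ℕ} (u : Fin m → List (Fin n))
    (h : ∀ i, (u i).length = b i) : ∃ v : ∀ i, Fin (b i) → Fin n, codeOf v = u := by
  refine ⟨fun i t => (u i).get (Fin.cast (h i).symm t), ?_⟩
  funext i
  apply List.ext_getElem
  · simp [codeOf, h i]
  · intro q h1 h2
    simp [codeOf]

lemma lenSet_finite {m : ℕ} (b : Fin m → ℕ) :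
    {u : Fin m → List (Fin n) | ∀ i, (u i).length = b i}.Finite := by
  have : {u : Fin m → List (Fin n) | ∀ i, (u i).length = b i} ⊆
      codeOf '' (Set.univ : Set (∀ i, Fin (b i) → Fin n)) := by
    intro u hu
    rcases exists_codeOf u hu with ⟨v, rfl⟩
    exact ⟨v, Set.mem_univ _, rfl⟩
  exact (Set.finite_univ.image _).subset this

lemma ncard_eq_card_filter {m : ℕ} (b : Fin m → ℕ) (S : Set (Fin m → List (Fin n)))
    (hS : ∀ u ∈ S, ∀ i, (u i).length = b i) :
    S.ncard = (Finset.univ.filter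
      (fun v : ∀ i, Fin (b i) → Fin n => codeOf v ∈ S)).card := by
  have him : S = codeOf '' ((Finset.univ.filter
      (fun v : ∀ i, Fin (b i) → Fin n => codeOf v ∈ S)) : Set (∀ i, Fin (b i) → Fin n)) := by
    ext u
    constructor
    · intro hu
      rcases exists_codeOf u (hS u hu) with ⟨v, rfl⟩
      exact ⟨v, by simpa using hu, rfl⟩
    · rintro ⟨v, hv, rfl⟩
      simpa using hv
  conv_lhs => rw [him]
  rw [Set.ncard_image_of_injective _ codeOf_injective, Set.ncard_coe_finset]

/-- the natural-number greedy lower bound factor -/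
def Fnk (n e i : ℕ) : ℕ := n ^ e - ∑ j ∈ Finset.range i, n ^ (e - (j + 1))

lemma geomsum_le {n : ℕ} (hn : 2 ≤ n) : ∀ e, ∑ d ∈ Finset.range e, n ^ d ≤ n ^ e - 1 := by
  intro e
  induction e with
  | zero => simp
  | succ e ih =>
    rw [Finset.sum_range_succ]
    have h2 : n ^ e ≥ 1 := Nat.one_le_pow _ _ (by omega)
    have h3 : n * n ^ e ≥ 2 * n ^ e := Nat.mul_le_mul_right _ hn
    have h4 : n ^ (e + 1) = n * n ^ e := by ring
    omega

lemma sum_pow_le {n e i : ℕ} (hn : 2 ≤ n) (hie : i ≤ e) :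
    ∑ j ∈ Finset.range i, n ^ (e - (j + 1)) ≤ n ^ e - 1 := by
  -- each exponent e-(j+1) is distinct and < e
  have h1 : ∑ j ∈ Finset.range i, n ^ (e - (j + 1)) ≤ ∑ d ∈ Finset.range e, n ^ d := by
    have : ∑ j ∈ Finset.range i, n ^ (e - (j + 1)) =
        ∑ d ∈ (Finset.range i).image (fun j => e - (j + 1)), n ^ d := by
      rw [Finset.sum_image]
      intro x hx y hy hxy
      simp only [Finset.mem_coe, Finset.mem_range] at hx hy
      simp only at hxy
      omega
    rw [this]
    apply Finset.sum_le_sum_of_subset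
    intro d hd
    simp only [Finset.mem_image, Finset.mem_range] at hd ⊢
    omega
  exact h1.trans (geomsum_le hn e)

lemma Fnk_pos {n e i : ℕ} (hn : 2 ≤ n) (hie : i ≤ e) : 0 < Fnk n e i := by
  have := sum_pow_le (e := e) (i := i) hn hie
  have h2 : 1 ≤ n ^ e := Nat.one_le_pow _ _ (by omega)
  unfold Fnk
  omega

lemma greedy (hn : 2 ≤ n) :
    ∀ (m : ℕ) (b : Fin m → ℕ), StrictMono b → (∀ i : Fin m, i.val + 1 ≤ b i) →
      ∏ i : Fin m, Fnk n (b i) i.val ≤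
        (Finset.univ.filter
          (fun v : ∀ i, Fin (b i) → Fin n => IsPrefixCode (codeOf v))).card := by
  intro m
  induction m with
  | zero =>
    intro b _ _
    have hall : ∀ v : (∀ i, Fin (b i) → Fin n), IsPrefixCode (codeOf v) := by
      intro v
      refine ⟨fun i => i.elim0, fun i => i.elim0, fun i => i.elim0⟩
    rw [Finset.filter_true_of_mem (fun v _ => hall v), Finset.card_univ]
    simp
  | succ m ih =>
    intro b hb hb1
    set b' : Fin m → ℕ := fun i => b i.castSucc with hb'def
    have hb' : StrictMono b' := fun i j hij => hb (by simpa using hij)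
    have hb1' : ∀ i : Fin m, i.val + 1 ≤ b' i := fun i => by
      simpa using hb1 i.castSucc
    have hblast : ∀ j : Fin m, b' j < b (Fin.last m) :=
      fun j => hb (Fin.castSucc_lt_last j)
    -- extensions of a given tuple u
    set Ext : (∀ i, Fin (b' i) → Fin n) → Finset (Fin (b (Fin.last m)) → Fin n) := fun u =>
      Finset.univ.filter (fun w => ∀ j : Fin m, ¬ (List.ofFn (u j) <+: List.ofFn w))
      with hExt
    -- step 1 : each Ext has many elements
    have step1 : ∀ u, Fnk n (b (Fin.last m)) m ≤ (Ext u).card := by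
      intro u
      have hbadj : ∀ j : Fin m,
          (Finset.univ.filter (fun w : Fin (b (Fin.last m)) → Fin n => List.ofFn (u j) <+: List.ofFn w)).card
            ≤ n ^ (b (Fin.last m) - (j.val + 1)) := by
        intro j
        have hlt : b' j < b (Fin.last m) := hblast j
        have hcard : (Finset.univ.filter
            (fun w : Fin (b (Fin.last m)) → Fin n => List.ofFn (u j) <+: List.ofFn w)).card
              ≤ n ^ (b (Fin.last m) - b' j) := by
          have := Finset.card_le_card_of_injOn
            (f := fun w : Fin (b (Fin.last m)) → Fin n => (fun t : Fin (b (Fin.last m) - b' j) =>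
              w ⟨b' j + t.val, by omega⟩))
            (s := Finset.univ.filter (fun w : Fin (b (Fin.last m)) → Fin n => List.ofFn (u j) <+: List.ofFn w))
            (t := Finset.univ)
            (fun w _ => Finset.mem_univ _) ?_
          · simpa using this
          · intro w1 hw1 w2 hw2 heq
            simp only [Finset.coe_filter, Set.mem_setOf_eq, Finset.mem_univ, true_and] at hw1 hw2
            funext q
            by_cases hq : q.val < b' j
            · have e1 : (List.ofFn (u j))[q.val]'(by rw [List.length_ofFn]; exact hq) =
                  (List.ofFn w1)[q.val]'(by rw [List.length_ofFn]; omega) :=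
                hw1.getElem (by rw [List.length_ofFn]; exact hq)
              have e2 : (List.ofFn (u j))[q.val]'(by rw [List.length_ofFn]; exact hq) =
                  (List.ofFn w2)[q.val]'(by rw [List.length_ofFn]; omega) :=
                hw2.getElem (by rw [List.length_ofFn]; exact hq)
              have f1 := List.getElem_ofFn (f := w1) (i := q.val) (by rw [List.length_ofFn]; omega)
              have f2 := List.getElem_ofFn (f := w2) (i := q.val) (by rw [List.length_ofFn]; omega)
              rw [f1] at e1
              rw [f2] at e2
              have e3 := e1.symm.trans e2
              simpa using e3
            · push_neg at hq
              have hq2 : q.val - b' j < b (Fin.last m) - b' j := by omega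
              have := congrFun heq ⟨q.val - b' j, hq2⟩
              simp only at this
              have hqq : b' j + (q.val - b' j) = q.val := by omega
              rw [show (⟨b' j + (q.val - b' j), by omega⟩ : Fin (b (Fin.last m))) = q by
                ext; simp [hqq]] at this
              exact this
        refine hcard.trans ?_
        exact Nat.pow_le_pow_right (by omega)
          (Nat.sub_le_sub_left (hb1' j) _)
      have hbad : (Finset.univ.filter
          (fun w : Fin (b (Fin.last m)) → Fin n => ∃ j : Fin m, List.ofFn (u j) <+: List.ofFn w)).card
            ≤ ∑ j ∈ Finset.range m, n ^ (b (Fin.last m) - (j + 1)) := by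
        have hsub : (Finset.univ.filter
            (fun w : Fin (b (Fin.last m)) → Fin n => ∃ j : Fin m, List.ofFn (u j) <+: List.ofFn w)) ⊆
            Finset.univ.biUnion (fun j : Fin m =>
              Finset.univ.filter (fun w : Fin (b (Fin.last m)) → Fin n => List.ofFn (u j) <+: List.ofFn w)) := by
          intro w hw
          simp only [Finset.mem_filter, Finset.mem_univ, true_and] at hw
          rcases hw with ⟨j, hj⟩
          exact Finset.mem_biUnion.2 ⟨j, Finset.mem_univ _, by simp [hj]⟩
        refine (Finset.card_le_card hsub).trans ?_
        refine (Finset.card_biUnion_le).trans ?_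
        rw [← Fin.sum_univ_eq_sum_range (fun j => n ^ (b (Fin.last m) - (j + 1))) m]
        exact Finset.sum_le_sum (fun j _ => hbadj j)
      have hsplit : (Ext u).card = n ^ (b (Fin.last m)) - (Finset.univ.filter
          (fun w : Fin (b (Fin.last m)) → Fin n => ∃ j : Fin m, List.ofFn (u j) <+: List.ofFn w)).card := by
        have hEq : Ext u = Finset.univ.filter
            (fun w : Fin (b (Fin.last m)) → Fin n => ¬ ∃ j : Fin m, List.ofFn (u j) <+: List.ofFn w) := by
          apply Finset.filter_congr
          intro w _
          push_neg
          rfl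
        have hpm := Finset.card_filter_add_card_filter_not
          (s := (Finset.univ : Finset (Fin (b (Fin.last m)) → Fin n)))
          (p := fun w : Fin (b (Fin.last m)) → Fin n =>
            ∃ j : Fin m, List.ofFn (u j) <+: List.ofFn w)
        have hcw : (Finset.univ : Finset (Fin (b (Fin.last m)) → Fin n)).card
            = n ^ (b (Fin.last m)) := by simp
        rw [hEq]
        omega
      rw [hsplit]
      unfold Fnk
      exact Nat.sub_le_sub_left hbad _
    -- step 2 : the set of pairs
    set PRF' := Finset.univ.filter
      (fun u : ∀ i, Fin (b' i) → Fin n => IsPrefixCode (codeOf u)) with hPRF'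
    set S' := Finset.univ.filter
      (fun p : (∀ i, Fin (b' i) → Fin n) × (Fin (b (Fin.last m)) → Fin n) => IsPrefixCode (codeOf p.1) ∧
        ∀ j : Fin m, ¬ (List.ofFn (p.1 j) <+: List.ofFn p.2)) with hS'
    have step2 : PRF'.card * Fnk n (b (Fin.last m)) m ≤ S'.card := by
      have hfib := Finset.card_eq_sum_card_fiberwise
        (f := Prod.fst) (s := S') (t := PRF')
        (fun p hp => by
          simp only [hS', Finset.mem_coe, Finset.mem_filter, Finset.mem_univ, true_and] at hp
          simp [hPRF', hp.1])
      rw [hfib]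
      have hfc : ∀ u ∈ PRF', Fnk n (b (Fin.last m)) m ≤
          (S'.filter (fun p => p.1 = u)).card := by
        intro u hu
        refine (step1 u).trans ?_
        apply Finset.card_le_card_of_injOn (fun w => (u, w))
        · intro w hw
          simp only [hExt, Finset.mem_coe, Finset.mem_filter, Finset.mem_univ, true_and] at hw
          simp only [hPRF', Finset.mem_filter, Finset.mem_univ, true_and] at hu
          exact Finset.mem_filter.2 ⟨Finset.mem_filter.2 ⟨Finset.mem_univ _, hu, hw⟩, rfl⟩
        · intro w1 _ w2 _ h
          exact congrArg Prod.snd h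
      calc PRF'.card * Fnk n (b (Fin.last m)) m
          = ∑ _u ∈ PRF', Fnk n (b (Fin.last m)) m := by
            rw [Finset.sum_const, smul_eq_mul]
        _ ≤ ∑ u ∈ PRF', (S'.filter (fun p => p.1 = u)).card :=
            Finset.sum_le_sum hfc
    -- step 3 : inject pairs into (m+1)-codes
    set J : ((∀ i, Fin (b' i) → Fin n) × (Fin (b (Fin.last m)) → Fin n)) → (∀ i : Fin (m + 1), Fin (b i) → Fin n) :=
      fun p => Fin.snoc p.1 p.2 with hJ
    have hJc : ∀ p (j : Fin m), codeOf (J p) j.castSucc = codeOf p.1 j := by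
      intro p j
      simp only [codeOf, hJ]
      congr 1
      exact Fin.snoc_castSucc _ _ _
    have hJl : ∀ p, codeOf (J p) (Fin.last m) = List.ofFn p.2 := by
      intro p
      simp only [codeOf, hJ]
      congr 1
      exact Fin.snoc_last _ _
    have hJinj : Function.Injective J := by
      intro p q h
      have h1 : p.1 = q.1 := by
        funext i
        have := congrFun h i.castSucc
        simpa only [hJ, Fin.snoc_castSucc] using this
      have h2 : p.2 = q.2 := by
        have := congrFun h (Fin.last m)
        simpa only [hJ, Fin.snoc_last] using this
      exact Prod.ext h1 h2
    have step3 : ∀ p ∈ S', IsPrefixCode (codeOf (J p)) := by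
      intro p hp
      simp only [hS', Finset.mem_filter, Finset.mem_univ, true_and] at hp
      obtain ⟨⟨hpinj, _hpne, hppre⟩, hpw⟩ := hp
      refine ⟨?_, ?_, ?_⟩
      · -- injective
        intro i i' h
        rcases Fin.eq_castSucc_or_eq_last i with ⟨j, rfl⟩ | rfl <;>
          rcases Fin.eq_castSucc_or_eq_last i' with ⟨j', rfl⟩ | rfl
        · rw [hJc, hJc] at h
          exact congrArg Fin.castSucc (hpinj h)
        · exfalso
          rw [hJc, hJl] at h
          have := congrArg List.length h
          rw [codeOf_length] at this
          simp at this
          exact absurd this (hblast j).ne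
        · exfalso
          rw [hJc, hJl] at h
          have := congrArg List.length h.symm
          rw [codeOf_length] at this
          simp at this
          exact absurd this (hblast j').ne
        · rfl
      · -- nonempty
        intro i
        have : (codeOf (J p) i).length = b i := codeOf_length _ _
        have hp1 : 1 ≤ b i := by have := hb1 i; omega
        intro hcon
        rw [hcon] at this
        simp at this
        omega
      · -- prefix-free
        intro i i' hne
        rcases Fin.eq_castSucc_or_eq_last i with ⟨j, rfl⟩ | rfl <;>
          rcases Fin.eq_castSucc_or_eq_last i' with ⟨j', rfl⟩ | rfl
        · rw [hJc, hJc]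
          exact hppre j j' (fun hcon => hne (by rw [hcon]))
        · rw [hJc, hJl]
          have := hpw j
          simpa [codeOf] using this
        · rw [hJc, hJl]
          intro hcon
          have := hcon.length_le
          simp only [codeOf, List.length_ofFn] at this
          exact absurd this (not_le.2 (hblast j'))
        · exact absurd rfl hne
    have step3' : S'.card ≤ (Finset.univ.filter
        (fun v : ∀ i : Fin (m+1), Fin (b i) → Fin n => IsPrefixCode (codeOf v))).card := by
      apply Finset.card_le_card_of_injOn J
      · intro p hp
        simp only [Finset.mem_coe, Finset.mem_filter, Finset.mem_univ, true_and]
        exact step3 p hp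
      · exact hJinj.injOn
    -- combine
    rw [Fin.prod_univ_castSucc]
    calc (∏ i : Fin m, Fnk n (b i.castSucc) (i.castSucc : Fin (m+1)).val) *
          Fnk n (b (Fin.last m)) (Fin.last m).val
        = (∏ i : Fin m, Fnk n (b' i) i.val) * Fnk n (b (Fin.last m)) m := by
          simp [hb'def]
      _ ≤ PRF'.card * Fnk n (b (Fin.last m)) m := by
          exact Nat.mul_le_mul_right _ (ih b' hb' hb1')
      _ ≤ S'.card := step2
      _ ≤ _ := step3'
end Counting
section Transfer
open scoped Classical
variable {n : ℕ}

lemma UD_finite {m : ℕ} (L : Fin m → ℕ) : (UD n L).Finite :=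
  (lenSet_finite L).subset (fun v hv => hv.1)

lemma PR_finite {m : ℕ} (L : Fin m → ℕ) : (PR n L).Finite :=
  (lenSet_finite L).subset (fun v hv => hv.1)

lemma UD_card_le {m : ℕ} (L : Fin m → ℕ) : (UD n L).ncard ≤ ∏ i : Fin m, n ^ L i := by
  rw [ncard_eq_card_filter L _ (fun u hu => hu.1)]
  calc (Finset.univ.filter (fun v : ∀ i, Fin (L i) → Fin n => codeOf v ∈ UD n L)).card
      ≤ (Finset.univ : Finset (∀ i, Fin (L i) → Fin n)).card := Finset.card_le_card (by simp)
    _ = ∏ i : Fin m, n ^ L i := by simp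

lemma PR_perm_card {m : ℕ} (L : Fin m → ℕ) (σ : Equiv.Perm (Fin m)) :
    (PR n (L ∘ σ)).ncard = (PR n L).ncard := by
  have hinj : Function.Injective (fun v : Fin m → List (Fin n) => v ∘ σ) := by
    intro v v' h
    funext i
    have := congrFun h (σ.symm i)
    simpa using this
  have him : (fun v : Fin m → List (Fin n) => v ∘ σ) '' (PR n L) = PR n (L ∘ σ) := by
    ext u
    constructor
    · rintro ⟨v, ⟨hlen, hv1, hv2, hv3⟩, rfl⟩
      refine ⟨fun i => hlen (σ i), ?_, fun i => hv2 _, ?_⟩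
      · intro i j h
        exact σ.injective (hv1 h)
      · intro i j hij
        exact hv3 _ _ (fun hcon => hij (σ.injective hcon))
    · rintro ⟨hlen, hv1, hv2, hv3⟩
      refine ⟨u ∘ σ.symm, ⟨?_, ?_, fun i => hv2 _, ?_⟩, ?_⟩
      · intro i
        have := hlen (σ.symm i)
        simpa using this
      · intro i j h
        simp only [Function.comp_apply] at h
        exact (Equiv.apply_eq_iff_eq _).1 (hv1 h)
      · intro i j hij
        exact hv3 _ _ (fun hcon => hij ((Equiv.apply_eq_iff_eq _).1 hcon))
      · funext i
        simp
  rw [← him, Set.ncard_image_of_injective _ hinj]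
end Transfer
section Exhibit
open scoped Classical
variable {n : ℕ}

/-- fiberwise counting over a product -/
lemma card_filter_prod {α β : Type*} [Fintype α] [Fintype β] [DecidableEq α]
    (PA : α → Prop) (PW : α → β → Prop) [DecidablePred PA]
    [∀ a, DecidablePred (PW a)] (c : ℕ)
    (h : ∀ a, PA a → (Finset.univ.filter (PW a)).card = c) :
    (Finset.univ.filter (fun p : α × β => PA p.1 ∧ PW p.1 p.2)).card =
      (Finset.univ.filter PA).card * c := by
  classical
  rw [Finset.card_eq_sum_card_fiberwise
    (f := Prod.fst) (t := Finset.univ.filter PA)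
    (fun p hp => by
      simp only [Finset.mem_coe, Finset.mem_filter, Finset.mem_univ, true_and] at hp ⊢
      exact hp.1)]
  have hfib : ∀ a ∈ Finset.univ.filter PA,
      ((Finset.univ.filter (fun p : α × β => PA p.1 ∧ PW p.1 p.2)).filter
        (fun p => p.1 = a)).card = c := by
    intro a ha
    simp only [Finset.mem_filter, Finset.mem_univ, true_and] at ha
    rw [← h a ha]
    apply Finset.card_bij (fun p _ => p.2)
    · intro p hp
      simp only [Finset.mem_filter, Finset.mem_univ, true_and] at hp ⊢
      rcases hp with ⟨⟨_, hPW⟩, hfst⟩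
      rwa [hfst] at hPW
    · intro p1 hp1 p2 hp2 h12
      simp only [Finset.mem_filter, Finset.mem_univ, true_and] at hp1 hp2
      exact Prod.ext (hp1.2.trans hp2.2.symm) h12
    · intro w hw
      simp only [Finset.mem_filter, Finset.mem_univ, true_and] at hw
      exact ⟨(a, w), Finset.mem_filter.2
        ⟨Finset.mem_filter.2 ⟨Finset.mem_univ _, ha, hw⟩, rfl⟩, rfl⟩
  rw [Finset.sum_congr rfl hfib, Finset.sum_const, smul_eq_mul, mul_comm]

variable {M k : ℕ}

noncomputable def Gmap (p : (Fin M → Fin n) × (Fin k → Fin n)) : Fin (M + 1) → List (Fin n) :=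
  scode p.1 (List.ofFn p.2)

lemma Gmap_injective : Function.Injective (Gmap (n := n) (M := M) (k := k)) := by
  intro p q h
  have h1 : p.1 = q.1 := by
    funext i
    have := congrFun h i.castSucc
    simp only [Gmap, scode, Fin.snoc_castSucc] at this
    exact List.singleton_injective this
  have h2 : p.2 = q.2 := by
    have := congrFun h (Fin.last M)
    simp only [Gmap, scode, Fin.snoc_last] at this
    exact List.ofFn_injective this
  exact Prod.ext h1 h2

/-- the exhibited length distribution -/
def LenEx (M k : ℕ) : Fin (M + 1) → ℕ := Fin.snoc (fun _ => 1) k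

lemma LenEx_castSucc (j : Fin M) : LenEx M k j.castSucc = 1 := by
  simp [LenEx]

lemma LenEx_last : LenEx M k (Fin.last M) = k := by
  simp [LenEx]

lemma Gmap_length (p : (Fin M → Fin n) × (Fin k → Fin n)) (i : Fin (M + 1)) :
    (Gmap p i).length = LenEx M k i := by
  rcases Fin.eq_castSucc_or_eq_last i with ⟨j, rfl⟩ | rfl
  · rw [LenEx_castSucc]; simp [Gmap, scode]
  · rw [LenEx_last]; simp [Gmap, scode]

lemma UD_Lex_lower (hk : 1 ≤ k) :
    (Finset.univ.filter (fun a : Fin M → Fin n => Function.Injective a)).card *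
      (n ^ k - M ^ k) ≤ (UD n (LenEx M k)).ncard := by
  classical
  set Ugood : Finset ((Fin M → Fin n) × (Fin k → Fin n)) :=
    Finset.univ.filter (fun p => Function.Injective p.1 ∧
      ∃ j, p.2 j ∉ Finset.univ.image p.1) with hUgood
  have hsub : (Gmap '' (Ugood : Set ((Fin M → Fin n) × (Fin k → Fin n)))) ⊆ UD n (LenEx M k) := by
    rintro _ ⟨p, hp, rfl⟩
    simp only [hUgood, Finset.coe_filter, Set.mem_setOf_eq, Finset.mem_univ, true_and] at hp
    refine ⟨Gmap_length p, ?_⟩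
    apply special_ud hp.1
    · intro hcon
      have := congrArg List.length hcon
      simp at this
      omega
    · rcases hp.2 with ⟨j, hj⟩
      exact ⟨p.2 j, by simp [List.mem_ofFn], hj⟩
  have h1 : Ugood.card ≤ (UD n (LenEx M k)).ncard := by
    have := Set.ncard_le_ncard hsub ((lenSet_finite (LenEx M k)).subset (fun v hv => hv.1))
    rwa [Set.ncard_image_of_injective _ Gmap_injective, Set.ncard_coe_finset] at this
  refine le_trans (le_of_eq ?_) h1
  rw [hUgood]
  refine (card_filter_prod (fun a : Fin M → Fin n => Function.Injective a)
    (fun (a : Fin M → Fin n) (w : Fin k → Fin n) => ∃ j, w j ∉ Finset.univ.image a) (n ^ k - M ^ k) ?_).symm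
  intro a ha
  have hcompl : (Finset.univ.filter (fun w : Fin k → Fin n =>
      ¬ ∃ j, w j ∉ Finset.univ.image a)).card = M ^ k := by
    have : (Finset.univ.filter (fun w : Fin k → Fin n =>
        ¬ ∃ j, w j ∉ Finset.univ.image a)) =
        Fintype.piFinset (fun _ : Fin k => Finset.univ.image a) := by
      ext w
      simp only [Finset.mem_filter, Finset.mem_univ, true_and, Fintype.mem_piFinset,
        not_exists, not_not]
    rw [this, Fintype.card_piFinset]
    rw [Finset.prod_congr rfl (fun i _ => Finset.card_image_of_injective Finset.univ ha)]
    simp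
  have hpm := Finset.card_filter_add_card_filter_not
    (s := (Finset.univ : Finset (Fin k → Fin n)))
    (p := fun w : Fin k → Fin n => ∃ j, w j ∉ Finset.univ.image a)
  have hcu : (Finset.univ : Finset (Fin k → Fin n)).card = n ^ k := by simp
  rw [hcu] at hpm
  rw [hcompl] at hpm
  exact Nat.eq_sub_of_add_eq hpm

lemma PR_Lex_upper (hk : 1 ≤ k) :
    (PR n (LenEx M k)).ncard ≤
      (Finset.univ.filter (fun a : Fin M → Fin n => Function.Injective a)).card *
        ((n - M) * n ^ (k - 1)) := by
  classical
  set Pgood : Finset ((Fin M → Fin n) × (Fin k → Fin n)) :=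
    Finset.univ.filter (fun p => Function.Injective p.1 ∧
      p.2 ⟨0, hk⟩ ∉ Finset.univ.image p.1) with hPgood
  have hsub : PR n (LenEx M k) ⊆ Gmap '' (Pgood : Set ((Fin M → Fin n) × (Fin k → Fin n))) := by
    intro v hv
    obtain ⟨hlen, hvinj, hvne, hvpre⟩ := hv
    have hlet : ∀ i : Fin M, ∃ c : Fin n, v i.castSucc = [c] := by
      intro i
      have := hlen i.castSucc
      rw [LenEx_castSucc] at this
      exact List.length_eq_one_iff.1 this
    choose a hae using hlet
    have hwlen : (v (Fin.last M)).length = k := by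
      have := hlen (Fin.last M)
      rwa [LenEx_last] at this
    set w : Fin k → Fin n := fun t => (v (Fin.last M)).get (Fin.cast hwlen.symm t) with hwdef
    have hofn : List.ofFn w = v (Fin.last M) := by
      apply List.ext_getElem
      · simp [hwlen]
      · intro q h1 h2
        simp [hwdef]
    refine ⟨(a, w), ?_, ?_⟩
    · simp only [hPgood, Finset.coe_filter, Set.mem_setOf_eq, Finset.mem_univ, true_and]
      constructor
      · intro i j hij
        apply Fin.castSucc_injective
        apply hvinj
        rw [hae i, hae j, hij]
      · intro hcon
        rw [Finset.mem_image] at hcon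
        rcases hcon with ⟨i, -, hi⟩
        apply hvpre i.castSucc (Fin.last M) (Fin.castSucc_lt_last i).ne
        rw [hae i, ← hofn]
        refine ⟨List.ofFn (fun t : Fin (k - 1) => w ⟨t.val + 1, by omega⟩), ?_⟩
        rw [hi]
        apply List.ext_getElem
        · simp; omega
        · intro q h1 h2
          rcases Nat.eq_zero_or_pos q with rfl | hq
          · simp [List.getElem_append]
          · rw [List.getElem_append_right (by simp only [List.length_singleton]; omega)]
            simp only [List.getElem_ofFn]
            congr 1
            ext
            simp
            omega
    · funext i
      rcases Fin.eq_castSucc_or_eq_last i with ⟨j, rfl⟩ | rfl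
      · simp only [Gmap, scode, Fin.snoc_castSucc]
        exact (hae j).symm
      · simp only [Gmap, scode, Fin.snoc_last]
        exact hofn
  have h1 : (PR n (LenEx M k)).ncard ≤ Pgood.card := by
    have := Set.ncard_le_ncard hsub
      ((Pgood : Set ((Fin M → Fin n) × (Fin k → Fin n))).toFinite.image Gmap)
    rwa [Set.ncard_image_of_injective _ Gmap_injective, Set.ncard_coe_finset] at this
  refine h1.trans (le_of_eq ?_)
  rw [hPgood]
  refine card_filter_prod (fun a : Fin M → Fin n => Function.Injective a)
    (fun (a : Fin M → Fin n) (w : Fin k → Fin n) => w ⟨0, hk⟩ ∉ Finset.univ.image a)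
    ((n - M) * n ^ (k - 1)) ?_
  intro a ha
  obtain ⟨k', rfl⟩ : ∃ k', k = k' + 1 := ⟨k - 1, by omega⟩
  have hset : (Finset.univ.filter (fun w : Fin (k' + 1) → Fin n =>
      w ⟨0, hk⟩ ∉ Finset.univ.image a)) =
      Fintype.piFinset (fun j : Fin (k' + 1) =>
        if j = ⟨0, hk⟩ then (Finset.univ.image a)ᶜ else Finset.univ) := by
    ext w
    simp only [Finset.mem_filter, Finset.mem_univ, true_and, Fintype.mem_piFinset]
    have h00 : (⟨0, hk⟩ : Fin (k' + 1)) = 0 := rfl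
    rw [h00]
    constructor
    · intro hw j
      by_cases hj : j = 0
      · subst hj; simp [hw]
      · simp [hj]
    · intro hw
      have := hw 0
      simpa using this
  rw [hset, Fintype.card_piFinset]
  have hfact : ∀ j : Fin (k' + 1),
      ((if j = ⟨0, hk⟩ then (Finset.univ.image a)ᶜ else Finset.univ) : Finset (Fin n)).card
        = if j = 0 then n - M else n := by
    intro j
    have h0 : (⟨0, hk⟩ : Fin (k' + 1)) = 0 := rfl
    rw [h0]
    by_cases hj : j = 0
    · rw [if_pos hj, if_pos hj, Finset.card_compl, Finset.card_image_of_injective _ ha]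
      simp
    · rw [if_neg hj, if_neg hj]
      simp
  rw [Finset.prod_congr rfl (fun j _ => hfact j), Fin.prod_univ_succ, if_pos rfl]
  have hrest : ∀ j : Fin k', (if (j.succ : Fin (k' + 1)) = 0 then n - M else n) = n :=
    fun j => if_neg (Fin.succ_ne_zero j)
  rw [Finset.prod_congr rfl (fun j _ => hrest j), Finset.prod_const, Finset.card_univ,
    Fintype.card_fin]
  simp
end Exhibit

open Finset

lemma sum_pow_frac_le {x : ℝ} (hx0 : 0 ≤ x) (hx1 : x < 1) (i : ℕ) :
    ∑ j ∈ Finset.range i, x ^ (j + 1) ≤ x / (1 - x) := by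
  have hne : x ≠ 1 := ne_of_lt hx1
  have h1x : 0 < 1 - x := by linarith
  have h1 : ∑ j ∈ Finset.range i, x ^ (j + 1) = x * ∑ j ∈ Finset.range i, x ^ j := by
    rw [Finset.mul_sum]
    exact Finset.sum_congr rfl (fun j _ => by ring)
  rw [h1]
  have h2 : ∑ j ∈ Finset.range i, x ^ j ≤ 1 / (1 - x) := by
    rw [geom_sum_eq hne]
    have h3 : (x ^ i - 1) / (x - 1) = (1 - x ^ i) / (1 - x) := by
      rw [div_eq_div_iff (by linarith) (by linarith)]
      ring
    rw [h3]
    have h4 : 1 - x ^ i ≤ 1 := by nlinarith [pow_nonneg hx0 i]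
    exact div_le_div_of_nonneg_right h4 h1x.le |>.trans_eq rfl
  calc x * ∑ j ∈ Finset.range i, x ^ j ≤ x * (1 / (1 - x)) :=
        mul_le_mul_of_nonneg_left h2 hx0
    _ = x / (1 - x) := by ring

lemma P3 : ∀ M : ℕ, 2 ≤ M → ∀ x : ℝ, 0 < x → x ≤ 1 / (M + 1) →
    1 - M * x + x ^ 3 ≤
      ∏ i ∈ Finset.range (M + 1), (1 - ∑ j ∈ Finset.range i, x ^ (j + 1)) := by
  intro M hM
  induction M, hM using Nat.le_induction with
  | base =>
    intro x hx0 hxle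
    have hx1 : x < 1 := by
      have : (1:ℝ) / (2 + 1) < 1 := by norm_num
      linarith
    rw [show (2:ℕ) + 1 = 3 from rfl]
    rw [Finset.prod_range_succ, Finset.prod_range_succ, Finset.prod_range_succ,
      Finset.prod_range_zero]
    rw [Finset.sum_range_zero, Finset.sum_range_succ, Finset.sum_range_zero,
      Finset.sum_range_succ, Finset.sum_range_succ, Finset.sum_range_zero]
    push_cast
    nlinarith [sq_nonneg x, hx0.le]
  | succ M hM ih =>
    intro x hx0 hxle
    have hMR : (2:ℝ) ≤ M := by exact_mod_cast hM
    have hxle' : x ≤ 1 / (M + 1) := by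
      refine hxle.trans ?_
      have h1 : (0:ℝ) < (M:ℝ) + 1 := by linarith
      have h2 : (0:ℝ) < (M:ℝ) + 1 + 1 := by linarith
      rw [div_le_div_iff₀ (by push_cast; linarith) h1]
      push_cast
      linarith
    have hx1 : x < 1 := by
      have : (1:ℝ) / (M + 1) < 1 := by
        rw [div_lt_one (by linarith)]
        linarith
      linarith
    have hP := ih x hx0 hxle'
    set s : ℝ := ∑ j ∈ Finset.range (M + 1), x ^ (j + 1) with hs
    have hs0 : 0 ≤ s := Finset.sum_nonneg (fun j _ => pow_nonneg hx0.le _)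
    have hsle : s ≤ x / (1 - x) := sum_pow_frac_le hx0.le hx1 _
    have h1x : 0 < 1 - x := by linarith
    -- x/(1-x) ≤ 1/(M+1): from x ≤ 1/(M+2)
    have hfrac : x / (1 - x) ≤ 1 / (M + 1) := by
      rw [div_le_div_iff₀ h1x (by linarith)]
      have : x * ((M:ℝ) + 1 + 1) ≤ 1 := by
        have := mul_le_mul_of_nonneg_right hxle (le_of_lt (show (0:ℝ) < (M:ℝ) + 1 + 1 by linarith))
        calc x * ((M:ℝ) + 1 + 1) ≤ 1 / (↑(M + 1) + 1) * ((M:ℝ) + 1 + 1) := by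
              apply mul_le_mul_of_nonneg_right hxle; push_cast; linarith
          _ = 1 := by
              push_cast
              field_simp
      push_cast at this ⊢
      linarith
    have hs1 : s ≤ 1 := by
      refine hsle.trans (hfrac.trans ?_)
      rw [div_le_one (by linarith)]
      linarith
    have hxM : x * ((M:ℝ) + 2) ≤ 1 := by
      have h5 : x ≤ 1 / ((M:ℝ) + 2) := by push_cast at hxle; convert hxle using 2; ring
      rw [← le_div_iff₀ (by linarith : (0:ℝ) < (M:ℝ) + 2)]
      exact h5
    have hbpos : 0 ≤ 1 - M * x + x ^ 3 := by
      nlinarith [pow_nonneg hx0.le 3]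
    have hkey : s * (1 - M * x + x ^ 3) ≤ x := by
      have hA : 1 - M * x + x ^ 3 ≤ 1 - x := by
        have hx2 : (0:ℝ) ≤ 1 - x ^ 2 := by nlinarith
        have hx3 : x ^ 3 ≤ x := by nlinarith [mul_nonneg hx0.le hx2]
        nlinarith
      calc s * (1 - M * x + x ^ 3) ≤ (x / (1 - x)) * (1 - M * x + x ^ 3) :=
            mul_le_mul_of_nonneg_right hsle hbpos
        _ ≤ (x / (1 - x)) * (1 - x) := by
            apply mul_le_mul_of_nonneg_left hA
            positivity
        _ = x := by field_simp
    rw [Finset.prod_range_succ]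
    have hprod0 : (0:ℝ) ≤ ∏ i ∈ Finset.range (M + 1),
        (1 - ∑ j ∈ Finset.range i, x ^ (j + 1)) := le_trans hbpos hP
    calc 1 - (↑(M + 1)) * x + x ^ 3
        ≤ (1 - M * x + x ^ 3) * (1 - s) := by push_cast; nlinarith
      _ ≤ (∏ i ∈ Finset.range (M + 1), (1 - ∑ j ∈ Finset.range i, x ^ (j + 1))) * (1 - s) := by
          apply mul_le_mul_of_nonneg_right hP
          linarith
section RhoLower
open scoped Classical

lemma strictMono_fin_lb {m : ℕ} {b : Fin m → ℕ} (hb : StrictMono b)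
    (h1 : ∀ i, 1 ≤ b i) : ∀ i : Fin m, i.val + 1 ≤ b i := by
  have key : ∀ q : ℕ, ∀ i : Fin m, i.val = q → q + 1 ≤ b i := by
    intro q
    induction q with
    | zero => intro i _; exact h1 i
    | succ q ih =>
      intro i hi
      have hq : q < m := by omega
      have hlt : (⟨q, hq⟩ : Fin m) < i := by
        rw [Fin.lt_def]; simp [hi]
      have := hb hlt
      have := ih ⟨q, hq⟩ rfl
      omega
  exact fun i => key i.val i rfl

lemma rho_injective_ge {n m : ℕ} (hn : 2 ≤ n) (L : Fin m → ℕ)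
    (hL1 : ∀ i, 1 ≤ L i) (hLinj : Function.Injective L)
    (hUD : (UD n L).Nonempty) :
    ∏ i ∈ Finset.range m, (1 - ∑ j ∈ Finset.range i, ((1:ℝ) / n) ^ (j + 1)) ≤ rho n L := by
  -- sort
  set σ := Tuple.sort L with hσ
  set b := L ∘ σ with hb
  have hbmono : Monotone b := Tuple.monotone_sort L
  have hbinj : Function.Injective b := hLinj.comp σ.injective
  have hbs : StrictMono b := hbmono.strictMono_of_injective hbinj
  have hb1 : ∀ i : Fin m, i.val + 1 ≤ b i :=
    strictMono_fin_lb hbs (fun i => hL1 _)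
  have hble : ∀ i : Fin m, ∀ j : ℕ, j < i.val → j + 1 ≤ b i := by
    intro i j hj
    have := hb1 i
    omega
  -- counting
  have hPRcard : ∏ i : Fin m, Fnk n (b i) i.val ≤ (PR n L).ncard := by
    rw [← PR_perm_card L σ]
    rw [ncard_eq_card_filter b (PR n (L ∘ σ)) (fun u hu => hu.1)]
    refine (greedy hn m b hbs hb1).trans (le_of_eq ?_)
    congr 1
    apply Finset.filter_congr
    intro v _
    constructor
    · intro h
      exact ⟨fun i => codeOf_length v i, h⟩
    · intro h
      exact h.2
  have hUDpos : 0 < (UD n L).ncard := (Set.ncard_pos (UD_finite L)).2 hUD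
  have hUDle : (UD n L).ncard ≤ ∏ i : Fin m, n ^ L i := UD_card_le L
  have hNeq : ∏ i : Fin m, n ^ L i = ∏ i : Fin m, n ^ b i := by
    rw [hb]
    exact (Equiv.prod_comp σ (fun i => n ^ L i)).symm
  -- real chain
  have hnR : (0:ℝ) < n := by positivity
  set NR : ℝ := ∏ i : Fin m, (n:ℝ) ^ b i with hNR
  have hNRpos : 0 < NR := Finset.prod_pos (fun i _ => by positivity)
  have hcastN : ((∏ i : Fin m, n ^ L i : ℕ) : ℝ) = NR := by
    rw [hNeq]
    push_cast
    rfl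
  have hUD_le_NR : ((UD n L).ncard : ℝ) ≤ NR := by
    rw [← hcastN]
    exact_mod_cast hUDle
  have h1 : ((∏ i : Fin m, Fnk n (b i) i.val : ℕ) : ℝ) / NR ≤ rho n L := by
    unfold rho
    have hPR' : ((∏ i : Fin m, Fnk n (b i) i.val : ℕ) : ℝ) ≤ ((PR n L).ncard : ℝ) := by
      exact_mod_cast hPRcard
    have hU0 : (0:ℝ) < ((UD n L).ncard : ℝ) := by exact_mod_cast hUDpos
    calc ((∏ i : Fin m, Fnk n (b i) i.val : ℕ) : ℝ) / NR
        ≤ ((PR n L).ncard : ℝ) / NR := by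
          apply div_le_div_of_nonneg_right hPR' hNRpos.le |>.trans_eq rfl
      _ ≤ ((PR n L).ncard : ℝ) / ((UD n L).ncard : ℝ) := by
          apply div_le_div_of_nonneg_left (by positivity) hU0 hUD_le_NR
  refine le_trans (le_of_eq ?_) h1
  -- expand the product of ratios
  rw [hNR]
  push_cast
  rw [← Finset.prod_div_distrib]
  rw [← Fin.prod_univ_eq_prod_range (fun i => 1 - ∑ j ∈ Finset.range i, ((1:ℝ)/n) ^ (j+1)) m]
  apply Finset.prod_congr rfl
  intro i _
  have hie : i.val ≤ b i := by have := hb1 i; omega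
  have hcast : ((Fnk n (b i) i.val : ℕ) : ℝ) =
      (n:ℝ) ^ (b i) - ∑ j ∈ Finset.range i.val, (n:ℝ) ^ (b i - (j + 1)) := by
    unfold Fnk
    have hle : ∑ j ∈ Finset.range i.val, n ^ (b i - (j + 1)) ≤ n ^ b i := by
      have := sum_pow_le (n := n) (e := b i) (i := i.val) hn hie
      have hp : 1 ≤ n ^ b i := Nat.one_le_pow _ _ (by omega)
      omega
    push_cast [Nat.cast_sub hle]
    ring
  rw [hcast]
  rw [sub_div]
  congr 1
  · field_simp
  · rw [Finset.sum_div]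
    apply Finset.sum_congr rfl
    intro j hj
    simp only [Finset.mem_range] at hj
    have hj1 : j + 1 ≤ b i := hble i j hj
    have hps := pow_sub_mul_pow (n:ℝ) hj1
    have hnz : (n:ℝ) ^ b i ≠ 0 := by positivity
    have hnz2 : (n:ℝ) ^ (j+1) ≠ 0 := by positivity
    have h2 : (n:ℝ) ^ (b i - (j + 1)) = (n:ℝ) ^ b i / (n:ℝ) ^ (j+1) := by
      rw [eq_div_iff hnz2]; exact hps
    rw [h2]
    field_simp
    rw [← mul_pow, one_div_mul_cancel hnR.ne', one_pow]
end RhoLower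

end Proofs
section Main
open scoped Classical

lemma witness_ud (n m : ℕ) (hn : 2 ≤ n) :
    (UD n (fun i : Fin m => i.val + 1)).Nonempty := by
  set v : Fin m → List (Fin n) :=
    fun i => List.replicate i.val (⟨0, by omega⟩ : Fin n) ++ [(⟨1, by omega⟩ : Fin n)] with hv
  have hlen : ∀ i, (v i).length = i.val + 1 := by
    intro i; simp [hv]
  have hne : ∀ i, v i ≠ [] := by
    intro i hcon
    have := congrArg List.length hcon
    rw [hlen i] at this
    simp at this
  have hpre : ∀ i j, i ≠ j → ¬ v i <+: v j := by
    intro i j hij hcon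
    have hlenle : i.val + 1 ≤ j.val + 1 := by
      have := hcon.length_le
      rwa [hlen i, hlen j] at this
    have hij' : i.val < j.val := by
      rcases lt_or_eq_of_le (by omega : i.val ≤ j.val) with h | h
      · exact h
      · exact absurd (Fin.ext h) hij
    have hi1 : i.val < (v i).length := by rw [hlen]; omega
    have e1 : (v i)[i.val]'hi1 = (⟨1, by omega⟩ : Fin n) := by
      simp only [hv]
      rw [List.getElem_append_right (by simp)]
      simp
    have hj1 : i.val < (v j).length := by rw [hlen]; omega
    have e2 : (v j)[i.val]'hj1 = (⟨0, by omega⟩ : Fin n) := by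
      simp only [hv]
      rw [List.getElem_append_left (by simp; omega)]
      simp
    have := hcon.getElem hi1
    rw [e1] at this
    rw [e2] at this
    have : (1 : ℕ) = 0 := congrArg Fin.val this
    omega
  have hinj : Function.Injective v := by
    intro i j h
    have := congrArg List.length h
    rw [hlen i, hlen j] at this
    exact Fin.ext (by omega)
  exact ⟨v, hlen, prefixCode_ud hinj hne hpre⟩

/-- Corollary 3: if `n ≥ m ≥ 3` then `ξ*_{n,m} > ξ_{n,m}`. -/
theorem stmt11 (n m : ℕ) (hm : 3 ≤ m) (hn : m ≤ n) : xi n m < xiStar n m := by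
  obtain ⟨M, rfl⟩ : ∃ M, m = M + 1 := ⟨m - 1, by omega⟩
  have hM2 : 2 ≤ M := by omega
  have hn2 : 2 ≤ n := by omega
  have hMn : M < n := by omega
  have hnR : (0:ℝ) < n := by positivity
  set x : ℝ := 1 / n with hx
  have hx0 : 0 < x := by positivity
  have hx1 : x ≤ 1/3 := by
    rw [hx, div_le_div_iff₀ hnR (by norm_num)]
    have : (3:ℝ) ≤ n := by exact_mod_cast (by omega : 3 ≤ n)
    linarith
  have hxle : x ≤ 1 / (M + 1) := by
    rw [hx, div_le_div_iff₀ hnR (by positivity)]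
    have : ((M:ℝ) + 1) ≤ n := by exact_mod_cast (by omega : M + 1 ≤ n)
    linarith
  set β : ℝ := 1 - M * x + x ^ 3 with hβ
  -- Step A : β ≤ xiStar
  have hA : β ≤ xiStar n (M + 1) := by
    apply le_csInf
    · refine ⟨rho n (fun i : Fin (M+1) => i.val + 1), fun i : Fin (M+1) => i.val + 1,
        fun i => Nat.le_add_left 1 i.val, ?_, witness_ud n (M+1) hn2, rfl⟩
      intro i j h
      have h' : i.val + 1 = j.val + 1 := h
      exact Fin.ext (by omega)
    · rintro r ⟨L, hL1, hLinj, hUD, rfl⟩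
      have hP3 := P3 M hM2 x hx0 hxle
      rw [hx] at hP3
      exact le_trans hP3 (rho_injective_ge hn2 L hL1 hLinj hUD)
  -- Step B : find k
  have htend : Filter.Tendsto (fun k => ((M:ℝ)/n) ^ k) Filter.atTop (nhds 0) :=
    tendsto_pow_atTop_nhds_zero_of_lt_one
      (div_nonneg (Nat.cast_nonneg M) hnR.le)
      (by rw [div_lt_one hnR]; exact_mod_cast hMn)
  have hev : ∀ᶠ k in Filter.atTop, ((M:ℝ)/n) ^ k < x ^ 3 / 2 :=
    htend.eventually (gt_mem_nhds (by positivity))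
  obtain ⟨k, hky, hk1⟩ := (hev.and (Filter.eventually_ge_atTop 1)).exists
  -- counting bounds
  have hE : 0 < (Finset.univ.filter
      (fun a : Fin M → Fin n => Function.Injective a)).card := by
    apply Finset.card_pos.2
    exact ⟨fun i => Fin.castLE hMn.le i,
      Finset.mem_filter.2 ⟨Finset.mem_univ _, fun i j h => Fin.castLE_injective hMn.le h⟩⟩
  have hNk : M ^ k < n ^ k := Nat.pow_lt_pow_left hMn (by omega)
  have hUDlow := UD_Lex_lower (n := n) (M := M) (k := k) hk1
  have hPRup := PR_Lex_upper (n := n) (M := M) (k := k) hk1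
  have hUDpos : 0 < (UD n (LenEx M k)).ncard :=
    lt_of_lt_of_le (Nat.mul_pos hE (by omega)) hUDlow
  have hUDne : (UD n (LenEx M k)).Nonempty := by
    rw [← Set.ncard_pos (UD_finite _)]
    exact hUDpos
  have hLex1 : ∀ i, 1 ≤ LenEx M k i := by
    intro i
    rcases Fin.eq_castSucc_or_eq_last i with ⟨j, rfl⟩ | rfl
    · rw [LenEx_castSucc]
    · rw [LenEx_last]; exact hk1
  -- real bound on rho
  set E := (Finset.univ.filter
    (fun a : Fin M → Fin n => Function.Injective a)).card with hEdef
  have hrho_le : rho n (LenEx M k) ≤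
      ((n:ℝ) - M) * (n:ℝ) ^ (k - 1) / ((n:ℝ) ^ k - (M:ℝ) ^ k) := by
    have hUD0 : (0:ℝ) < ((UD n (LenEx M k)).ncard : ℝ) := by exact_mod_cast hUDpos
    have hEMk0 : (0:ℝ) < ((E * (n ^ k - M ^ k) : ℕ) : ℝ) := by
      exact_mod_cast Nat.mul_pos hE (by omega : 0 < n ^ k - M ^ k)
    have step1 : rho n (LenEx M k) ≤
        ((E * ((n - M) * n ^ (k - 1)) : ℕ) : ℝ) / ((E * (n ^ k - M ^ k) : ℕ) : ℝ) := by
      unfold rho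
      calc ((PR n (LenEx M k)).ncard : ℝ) / ((UD n (LenEx M k)).ncard : ℝ)
          ≤ ((E * ((n - M) * n ^ (k - 1)) : ℕ) : ℝ) / ((UD n (LenEx M k)).ncard : ℝ) := by
            apply div_le_div_of_nonneg_right ?_ hUD0.le |>.trans_eq rfl
            exact_mod_cast hPRup
        _ ≤ ((E * ((n - M) * n ^ (k - 1)) : ℕ) : ℝ) / ((E * (n ^ k - M ^ k) : ℕ) : ℝ) := by
            apply div_le_div_of_nonneg_left (by positivity) hEMk0
            exact_mod_cast hUDlow
    refine step1.trans (le_of_eq ?_)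
    have hc1 : ((E * ((n - M) * n ^ (k - 1)) : ℕ) : ℝ)
        = (E : ℝ) * (((n:ℝ) - M) * (n:ℝ) ^ (k - 1)) := by
      push_cast [Nat.cast_sub hMn.le]
      ring
    have hc2 : ((E * (n ^ k - M ^ k) : ℕ) : ℝ) = (E : ℝ) * ((n:ℝ) ^ k - (M:ℝ) ^ k) := by
      push_cast [Nat.cast_sub hNk.le]
      ring
    rw [hc1, hc2]
    rw [mul_div_mul_left _ _ (by exact_mod_cast hE.ne' : (E:ℝ) ≠ 0)]
  -- final strict inequality
  have hfinal : ((n:ℝ) - M) * (n:ℝ) ^ (k - 1) / ((n:ℝ) ^ k - (M:ℝ) ^ k) < β := by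
    set y : ℝ := ((M:ℝ)/n) ^ k with hy
    have hy0 : 0 ≤ y := by positivity
    have hyM : y * (n:ℝ) ^ k = (M:ℝ) ^ k := by
      rw [hy, div_pow]
      field_simp
    have hden : (0:ℝ) < (n:ℝ) ^ k - (M:ℝ) ^ k := by
      have : ((M ^ k : ℕ) : ℝ) < ((n ^ k : ℕ) : ℝ) := by exact_mod_cast hNk
      push_cast at this
      linarith
    rw [div_lt_iff₀ hden]
    have hnum : ((n:ℝ) - M) * (n:ℝ) ^ (k - 1) = (1 - M * x) * (n:ℝ) ^ k := by
      have hpw : (n:ℝ) ^ (k - 1) * (n:ℝ) ^ 1 = (n:ℝ) ^ k := pow_sub_mul_pow (n:ℝ) hk1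
      have : (n:ℝ) ^ k = (n:ℝ) ^ (k-1) * n := by rw [← hpw]; ring
      rw [this, hx]
      field_simp
    have hexp : (n:ℝ) ^ k - (M:ℝ) ^ k = (1 - y) * (n:ℝ) ^ k := by
      rw [sub_mul, one_mul, hyM]
    rw [hnum, hexp]
    have hnk0 : (0:ℝ) < (n:ℝ) ^ k := by positivity
    have hy1 : y < 1 := by
      nlinarith [hky, hx0.le, pow_nonneg hx0.le 3]
    have hMx : (M:ℝ) * x ≤ 1 := by
      have : (M:ℝ) * x ≤ (M:ℝ) * (1 / (M+1)) := by
        apply mul_le_mul_of_nonneg_left hxle (Nat.cast_nonneg M)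
      have h2 : (M:ℝ) * (1 / (M+1)) ≤ 1 := by
        rw [mul_one_div, div_le_one (by positivity)]
        linarith
      linarith
    have hkey : 1 - M * x < β * (1 - y) := by
      rw [hβ]
      have hxle1 : x ≤ 1 := by linarith
      have hx3 : x ^ 3 ≤ 1 := pow_le_one₀ hx0.le hxle1
      have hMx0 : 0 ≤ (M:ℝ) * x := by positivity
      have hβle : 1 - M * x + x ^ 3 ≤ 2 := by linarith
      have hβpos : 0 ≤ 1 - M * x + x ^ 3 := by nlinarith [pow_nonneg hx0.le 3]
      have hyβ : y * (1 - M * x + x ^ 3) ≤ y * 2 :=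
        mul_le_mul_of_nonneg_left hβle hy0
      have expand : (1 - M * x + x ^ 3) * (1 - y)
          = (1 - M * x + x ^ 3) - y * (1 - M * x + x ^ 3) := by ring
      rw [expand]
      linarith [hky]
    calc (1 - M * x) * (n:ℝ) ^ k < (β * (1 - y)) * (n:ℝ) ^ k := by
          apply mul_lt_mul_of_pos_right hkey hnk0
      _ = β * ((1 - y) * (n:ℝ) ^ k) := by ring
  -- conclude
  have hmem : rho n (LenEx M k) ∈
      {r : ℝ | ∃ L : Fin (M+1) → ℕ, (∀ i, 1 ≤ L i) ∧ (UD n L).Nonempty ∧ r = rho n L} :=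
    ⟨LenEx M k, hLex1, hUDne, rfl⟩
  have hbdd : BddBelow {r : ℝ | ∃ L : Fin (M+1) → ℕ,
      (∀ i, 1 ≤ L i) ∧ (UD n L).Nonempty ∧ r = rho n L} := by
    refine ⟨0, ?_⟩
    rintro r ⟨L, -, -, rfl⟩
    unfold rho
    positivity
  calc xi n (M + 1) ≤ rho n (LenEx M k) := csInf_le hbdd hmem
    _ < β := lt_of_le_of_lt hrho_le hfinal
    _ ≤ xiStar n (M + 1) := hA
end Main
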